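/- Define Â(n; d_1,…,d_r) := Σ_{j=0}^{r} (-1)^{n+r+j} Σ_{1 ≤ k_1 < ⋯ < k_j ≤ r} C(c_1/2 - 1 + d_{k_1} + ⋯ + d_{k_j}, n+r), where c_1 = n + r + 1 - Σ d_i is even and all d_i > 1. If c_1 < 0 and n is even then Â(n; d) ≥ 2·C(n + 1 - c_1/2, n+1) > 0; if n is odd then Â(n; d) = 0. -/

import Mathlib

open Finset

/-- Generalized binomial coefficient `C(a, k) = a(a-1)⋯(a-k+1)/k!`. -/
def gbc (a : ℚ) (k : ℕ) : ℚ :=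
  (∏ i ∈ Finset.range k, (a - i)) / (Nat.factorial k)


/-- The Â-genus of the spin complete intersection `X_n(d₁,…,d_r)`, i.e.
`χ(X_n(d), K^{1/2})`, via the combinatorial formula. -/
def Ahat (n r : ℕ) (d : Fin r → ℤ) : ℚ :=
  ∑ S ∈ (Finset.univ : Finset (Fin r)).powerset,
    (-1) ^ (n + r + S.card) *
      gbc (((n : ℚ) + r + 1 - ∑ i, (d i : ℚ)) / 2 - 1 + ∑ i ∈ S, (d i : ℚ)) (n + r)

open Polynomial in
noncomputable def gpoly (d : ℕ) : Polynomial ℚ := ∑ j ∈ Finset.range d, Polynomial.X ^ j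

lemma gbc_pascal (a : ℚ) (k : ℕ) : gbc (a+1) (k+1) = gbc a (k+1) + gbc a k := by
  unfold gbc
  have h : (∏ i ∈ range (k+1), (a + 1 - (i:ℚ))) = (∏ i ∈ range k, (a - (i:ℚ))) * (a+1) := by
    rw [Finset.prod_range_succ']
    congr 1
    · exact Finset.prod_congr rfl fun i _ => by push_cast; ring
    · push_cast; ring
  rw [h, Finset.prod_range_succ, Nat.factorial_succ]
  have hk : (Nat.factorial k : ℚ) ≠ 0 := Nat.cast_ne_zero.mpr (Nat.factorial_ne_zero k)
  have hk1 : ((k:ℚ) + 1) ≠ 0 := by positivity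
  push_cast
  field_simp
  ring

lemma gbc_reflect (a : ℚ) (k : ℕ) : gbc ((k:ℚ) - 1 - a) k = (-1)^k * gbc a k := by
  unfold gbc
  rw [← mul_div_assoc]
  congr 1
  calc ∏ i ∈ range k, ((k:ℚ) - 1 - a - ↑i)
      = ∏ i ∈ range k, (-1) * (a - ((k:ℚ) - 1 - ↑i)) := Finset.prod_congr rfl fun i _ => by ring
    _ = (-1)^k * ∏ i ∈ range k, (a - ((k:ℚ) - 1 - ↑i)) := by
        rw [Finset.prod_mul_distrib, Finset.prod_const, Finset.card_range]
    _ = (-1)^k * ∏ i ∈ range k, (a - ((k - 1 - i : ℕ) : ℚ)) := by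
        congr 1
        refine Finset.prod_congr rfl fun i hi => ?_
        have h1 : i + 1 ≤ k := Finset.mem_range.mp hi
        congr 1
        push_cast [Nat.cast_sub (by omega : i ≤ k - 1), Nat.cast_sub (by omega : 1 ≤ k)]
        ring
    _ = (-1)^k * ∏ i ∈ range k, (a - ↑i) := by rw [Finset.prod_range_reflect (fun j => a - (j:ℚ)) k]

lemma gbc_nonneg_of_factors (b : ℚ) (k : ℕ) (h : ∀ i : ℕ, i < k → 0 ≤ b - i) : 0 ≤ gbc b k := by
  unfold gbc
  apply div_nonneg
  · exact Finset.prod_nonneg fun i hi => h i (Finset.mem_range.mp hi)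
  · positivity

lemma gbc_pos_of_factors (b : ℚ) (k : ℕ) (h : ∀ i : ℕ, i < k → 0 < b - i) : 0 < gbc b k := by
  unfold gbc
  apply div_pos
  · exact Finset.prod_pos fun i hi => h i (Finset.mem_range.mp hi)
  · exact_mod_cast Nat.factorial_pos k

lemma gbc_int_nonneg (z : ℤ) (k : ℕ) (hk : Even k) : 0 ≤ gbc (z:ℚ) k := by
  rcases lt_or_ge z 0 with hz | hz
  · have h1 : (z:ℚ) = (k:ℚ) - 1 - ((k:ℚ) - 1 - z) := by ring
    rw [h1, gbc_reflect, hk.neg_one_pow, one_mul]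
    apply gbc_nonneg_of_factors
    intro i hi
    have : ((k:ℚ) - 1 - z) - i = ((k:ℤ) - 1 - z - i : ℤ) := by push_cast; ring
    rw [this]
    have : (0:ℤ) ≤ (k:ℤ) - 1 - z - i := by omega
    exact_mod_cast this
  · rcases lt_or_ge z k with hzk | hzk
    · unfold gbc
      rw [Finset.prod_eq_zero (Finset.mem_range.mpr (show z.toNat < k by omega))
        (by rw [show ((z.toNat : ℕ) : ℚ) = (z:ℚ) from by exact_mod_cast Int.toNat_of_nonneg hz]; ring), zero_div]
    · apply gbc_nonneg_of_factors
      intro i hi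
      have : ((z:ℚ)) - i = ((z - i : ℤ) : ℚ) := by push_cast; ring
      rw [this]
      have : (0:ℤ) ≤ z - i := by omega
      exact_mod_cast this

lemma gbc_sum_range (x : ℚ) (t : ℕ) (b : ℕ) :
    ∑ K ∈ range b, gbc (x + K) t = gbc (x + b) (t+1) - gbc x (t+1) := by
  induction b with
  | zero => simp
  | succ b ih =>
      rw [Finset.sum_range_succ, ih]
      have hp : gbc ((x + b) + 1) (t+1) = gbc (x + b) (t+1) + gbc (x + b) t :=
        gbc_pascal (x + b) t
      push_cast
      rw [show x + ((b:ℚ) + 1) = (x + b) + 1 by ring, hp]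
      ring

lemma gpoly_coeff (d K : ℕ) : (gpoly d).coeff K = if K < d then 1 else 0 := by
  unfold gpoly
  rw [Polynomial.finset_sum_coeff]
  simp [Polynomial.coeff_X_pow, Finset.sum_ite_eq' (range d) K (fun _ => (1:ℚ)), Finset.mem_range]

lemma gpoly_natDegree (d : ℕ) (hd : 1 ≤ d) : (gpoly d).natDegree = d - 1 := by
  apply le_antisymm
  · unfold gpoly; apply Polynomial.natDegree_sum_le_of_forall_le
    intro j hj
    simpa using Nat.le_sub_one_of_lt (Finset.mem_range.mp hj)
  · apply Polynomial.le_natDegree_of_ne_zero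
    rw [gpoly_coeff]
    simp only [if_pos (by omega : d - 1 < d)]
    norm_num

lemma gpoly_ne_zero (d : ℕ) (hd : 1 ≤ d) : gpoly d ≠ 0 := by
  intro h
  have h0 := gpoly_coeff d 0
  rw [h, if_pos (by omega : 0 < d)] at h0
  simp at h0

lemma gpoly_reverse (d : ℕ) (hd : 1 ≤ d) : (gpoly d).reverse = gpoly d := by
  ext K
  rw [Polynomial.coeff_reverse, gpoly_natDegree d hd]
  rcases le_or_gt K (d-1) with h | h
  · rw [Polynomial.revAt_le h, gpoly_coeff, gpoly_coeff, if_pos (by omega), if_pos (by omega)]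
  · rw [Polynomial.revAt_eq_self_of_lt h]

lemma step_XsubOne (p : Polynomial ℚ) (x : ℚ) (t M : ℕ) (hp : p.natDegree < M) :
    ∑ K ∈ range (M+1), (p * (Polynomial.X - 1)).coeff K * gbc (x + K) (t+1)
      = ∑ K ∈ range M, p.coeff K * gbc (x + K) t := by
  have hsplit : ∀ K, (p * (Polynomial.X - 1)).coeff K = (p * Polynomial.X).coeff K - p.coeff K := by
    intro K
    rw [mul_sub, mul_one, Polynomial.coeff_sub]
  simp only [hsplit, sub_mul]
  rw [Finset.sum_sub_distrib]
  have h1 : ∑ K ∈ range (M+1), (p * Polynomial.X).coeff K * gbc (x + K) (t+1)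
      = ∑ K ∈ range M, p.coeff K * gbc (x + (K+1:ℕ)) (t+1) := by
    rw [Finset.sum_range_succ']
    simp [Polynomial.coeff_mul_X]
  have h2 : ∑ K ∈ range (M+1), p.coeff K * gbc (x + K) (t+1)
      = ∑ K ∈ range M, p.coeff K * gbc (x + K) (t+1) := by
    rw [Finset.sum_range_succ, Polynomial.coeff_eq_zero_of_natDegree_lt hp]
    simp
  rw [h1, h2, ← Finset.sum_sub_distrib]
  refine Finset.sum_congr rfl fun K _ => ?_
  have hpas := gbc_pascal (x + K) t
  rw [show x + ((K+1:ℕ):ℚ) = (x + K) + 1 by push_cast; ring, hpas]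
  ring

lemma step_pow (p : Polynomial ℚ) (x : ℚ) (t M : ℕ) (hp : p.natDegree < M) (r : ℕ) :
    ∑ K ∈ range (M+r), (p * (Polynomial.X - 1)^r).coeff K * gbc (x + K) (t+r)
      = ∑ K ∈ range M, p.coeff K * gbc (x + K) t := by
  induction r generalizing p t M with
  | zero => simp
  | succ r ih =>
      have hq : (p * (Polynomial.X - 1)).natDegree < M + 1 := by
        have := Polynomial.natDegree_mul_le (p := p) (q := Polynomial.X - 1)
        have hX : (Polynomial.X - 1 : Polynomial ℚ).natDegree ≤ 1 := by
          simpa using Polynomial.natDegree_X_sub_C_le (1:ℚ)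
        omega
      have h := ih (p * (Polynomial.X - 1)) (t+1) (M+1) hq
      rw [step_XsubOne p x t M hp] at h
      rw [← h]
      apply Finset.sum_congr
      · congr 1; omega
      · intro K _
        congr 2
        · rw [pow_succ]; ring
        · omega

lemma gpoly_coeff_nonneg (d K : ℕ) : 0 ≤ (gpoly d).coeff K := by
  rw [gpoly_coeff]; split <;> norm_num

lemma prod_gpoly_coeff {ι : Type*} [DecidableEq ι] (δ : ι → ℕ) (hδ : ∀ i, 1 ≤ δ i)
    (s : Finset ι) : ∀ K : ℕ, 0 ≤ (∏ i ∈ s, gpoly (δ i)).coeff K ∧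
      (K ≤ ∑ i ∈ s, (δ i - 1) → 1 ≤ (∏ i ∈ s, gpoly (δ i)).coeff K) := by
  induction s using Finset.induction_on with
  | empty =>
      intro K
      simp only [Finset.prod_empty, Polynomial.coeff_one, Finset.sum_empty]
      constructor
      · split <;> norm_num
      · intro hK
        rw [if_pos (by omega)]
  | @insert a s ha ih =>
      intro K
      rw [Finset.prod_insert ha, Polynomial.coeff_mul]
      constructor
      · exact Finset.sum_nonneg fun x _ =>
          mul_nonneg (gpoly_coeff_nonneg _ _) (ih x.2).1
      · intro hK
        rw [Finset.sum_insert ha] at hK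
        set i₀ := min K (δ a - 1) with hi₀
        have hmem : (i₀, K - i₀) ∈ Finset.HasAntidiagonal.antidiagonal K := by
          rw [Finset.HasAntidiagonal.mem_antidiagonal]; omega
        have hterm : 1 ≤ (gpoly (δ a)).coeff i₀ * (∏ i ∈ s, gpoly (δ i)).coeff (K - i₀) := by
          have h1 : (gpoly (δ a)).coeff i₀ = 1 := by
            rw [gpoly_coeff, if_pos (by have := hδ a; omega)]
          rw [h1, one_mul]
          exact (ih (K - i₀)).2 (by omega)
        have hle := Finset.single_le_sum (f := fun x : ℕ × ℕ => (gpoly (δ a)).coeff x.1 *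
            (∏ i ∈ s, gpoly (δ i)).coeff x.2)
            (fun x _ => mul_nonneg (gpoly_coeff_nonneg _ _) (ih x.2).1) hmem
        exact le_trans hterm hle

lemma prod_gpoly_reverse {ι : Type*} [DecidableEq ι] (δ : ι → ℕ) (hδ : ∀ i, 1 ≤ δ i)
    (s : Finset ι) : (∏ i ∈ s, gpoly (δ i)).reverse = ∏ i ∈ s, gpoly (δ i) := by
  induction s using Finset.induction_on with
  | empty =>
      simp only [Finset.prod_empty]
      rw [show (1 : Polynomial ℚ) = Polynomial.C 1 by simp, Polynomial.reverse_C]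
  | @insert a s ha ih =>
      rw [Finset.prod_insert ha, Polynomial.reverse_mul_of_domain, ih,
        gpoly_reverse _ (hδ a)]

lemma prod_gpoly_natDegree {ι : Type*} [DecidableEq ι] (δ : ι → ℕ) (hδ : ∀ i, 1 ≤ δ i)
    (s : Finset ι) : (∏ i ∈ s, gpoly (δ i)).natDegree = ∑ i ∈ s, (δ i - 1) := by
  rw [Polynomial.natDegree_prod _ _ (fun i _ => gpoly_ne_zero _ (hδ i))]
  exact Finset.sum_congr rfl fun i _ => gpoly_natDegree _ (hδ i)

lemma prod_gpoly_palindrome {ι : Type*} [DecidableEq ι] (δ : ι → ℕ) (hδ : ∀ i, 1 ≤ δ i)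
    (s : Finset ι) (K : ℕ) (hK : K ≤ ∑ i ∈ s, (δ i - 1)) :
    (∏ i ∈ s, gpoly (δ i)).coeff K
      = (∏ i ∈ s, gpoly (δ i)).coeff ((∑ i ∈ s, (δ i - 1)) - K) := by
  conv_lhs => rw [← prod_gpoly_reverse δ hδ s]
  rw [Polynomial.coeff_reverse, prod_gpoly_natDegree δ hδ s, Polynomial.revAt_le hK]

lemma master (n r : ℕ) (d : Fin r → ℤ) (hd : ∀ i, 1 < d i) :
    Ahat n r d = (-1:ℚ)^n * ∑ K ∈ range ((∑ i, ((d i).toNat - 1)) + 1),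
      (∏ i, gpoly ((d i).toNat)).coeff K *
      gbc ((((n : ℚ) + r + 1 - ∑ i, (d i : ℚ)) / 2 - 1) + K) n := by
  classical
  unfold Ahat
  set δ : Fin r → ℕ := fun i => (d i).toNat with hδdef
  have hδ2 : ∀ i, 2 ≤ δ i := fun i => by have := hd i; simp [hδdef]; omega
  have hδ1 : ∀ i, 1 ≤ δ i := fun i => le_trans (by norm_num) (hδ2 i)
  have hcast : ∀ i, ((δ i : ℕ) : ℚ) = (d i : ℚ) := fun i => by
    have h : ((d i).toNat : ℤ) = d i := Int.toNat_of_nonneg (by have := hd i; omega)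
    exact_mod_cast congrArg (fun z : ℤ => (z : ℚ)) h
  set e : ℚ := ((n : ℚ) + r + 1 - ∑ i, (d i : ℚ)) / 2 - 1 with he
  set N' : ℕ := ∑ i, (δ i - 1) with hN'
  set Q : Polynomial ℚ := ∏ i, gpoly (δ i) with hQ
  have hsumδ : N' + r = ∑ i, δ i := by
    have hstep : ∀ i ∈ (Finset.univ : Finset (Fin r)), δ i - 1 + 1 = δ i :=
      fun i _ => by have := hδ1 i; omega
    calc ∑ i, (δ i - 1) + r = ∑ i, (δ i - 1) + ∑ _i : Fin r, 1 := by
          simp [Finset.sum_const, Finset.card_univ]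
      _ = ∑ i, ((δ i - 1) + 1) := Finset.sum_add_distrib.symm
      _ = ∑ i, δ i := Finset.sum_congr rfl hstep
  -- G = Q * (X-1)^r
  have hfac : ∀ i : Fin r, (Polynomial.X ^ (δ i) - 1 : Polynomial ℚ)
      = gpoly (δ i) * (Polynomial.X - 1) := fun i => (geom_sum_mul Polynomial.X (δ i)).symm
  have hG : (∏ i, (Polynomial.X ^ (δ i) - 1 : Polynomial ℚ))
      = Q * (Polynomial.X - 1)^r := by
    rw [hQ]
    calc ∏ i, (Polynomial.X ^ (δ i) - 1 : Polynomial ℚ)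
        = ∏ i, (gpoly (δ i) * (Polynomial.X - 1)) := Finset.prod_congr rfl fun i _ => hfac i
      _ = (∏ i, gpoly (δ i)) * ∏ _i : Fin r, (Polynomial.X - 1) := Finset.prod_mul_distrib
      _ = (∏ i, gpoly (δ i)) * (Polynomial.X - 1)^r := by
          rw [Finset.prod_const, Finset.card_univ, Fintype.card_fin]
  -- G as powerset sum
  have hGsum : (∏ i, (Polynomial.X ^ (δ i) - 1 : Polynomial ℚ))
      = ∑ S ∈ (Finset.univ : Finset (Fin r)).powerset,
          (Polynomial.C ((-1:ℚ)^(r - S.card))) * Polynomial.X ^ (∑ i ∈ S, δ i) := by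
    have := Finset.prod_add (fun i : Fin r => (Polynomial.X ^ (δ i) : Polynomial ℚ))
      (fun _ => (-1 : Polynomial ℚ)) Finset.univ
    simp only [show ∀ i : Fin r, (Polynomial.X ^ (δ i) + -1 : Polynomial ℚ)
        = Polynomial.X ^ (δ i) - 1 from fun i => by ring] at this
    rw [this]
    refine Finset.sum_congr rfl fun S _ => ?_
    rw [Finset.prod_const, Finset.card_sdiff_of_subset (Finset.subset_univ S), Finset.card_univ,
      Fintype.card_fin, Finset.prod_pow_eq_pow_sum]
    rw [mul_comm]
    congr 1
    rw [← Polynomial.C_1, ← Polynomial.C_neg, ← Polynomial.C_pow]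
  -- coefficient sum of G equals powerset sum
  have hA : ∑ K ∈ range (N'+1+r), (Q * (Polynomial.X - 1)^r).coeff K * gbc (e + K) (n+r)
      = ∑ S ∈ (Finset.univ : Finset (Fin r)).powerset,
          (-1:ℚ)^(r - S.card) * gbc (e + ((∑ i ∈ S, δ i : ℕ) : ℚ)) (n+r) := by
    rw [← hG, hGsum]
    simp only [Polynomial.finset_sum_coeff, Polynomial.coeff_C_mul, Polynomial.coeff_X_pow,
      Finset.sum_mul]
    rw [Finset.sum_comm]
    refine Finset.sum_congr rfl fun S hS => ?_
    have hσ : (∑ i ∈ S, δ i) ∈ range (N'+1+r) := by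
      rw [Finset.mem_range]
      have : ∑ i ∈ S, δ i ≤ ∑ i, δ i := Finset.sum_le_sum_of_subset (Finset.subset_univ S)
      omega
    rw [Finset.sum_eq_single_of_mem (∑ i ∈ S, δ i) hσ]
    · rw [if_pos rfl, mul_one]
    · intro b _ hb
      rw [if_neg hb, mul_zero, zero_mul]
  have hdeg : Q.natDegree < N'+1 := by
    rw [hQ, prod_gpoly_natDegree δ hδ1]
    omega
  have hB := step_pow Q e n (N'+1) hdeg r
  -- assemble
  have hLHS : ∑ S ∈ (Finset.univ : Finset (Fin r)).powerset,
      (-1:ℚ) ^ (n + r + S.card) * gbc (e + ∑ i ∈ S, (d i : ℚ)) (n + r)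
      = (-1:ℚ)^n * ∑ S ∈ (Finset.univ : Finset (Fin r)).powerset,
          (-1:ℚ)^(r - S.card) * gbc (e + ((∑ i ∈ S, δ i : ℕ) : ℚ)) (n+r) := by
    rw [Finset.mul_sum]
    refine Finset.sum_congr rfl fun S hS => ?_
    have hcard : S.card ≤ r := by
      have := Finset.card_le_card (Finset.mem_powerset.mp hS)
      simpa using this
    have hsgn : (-1:ℚ) ^ (n + r + S.card) = (-1:ℚ)^n * (-1:ℚ)^(r - S.card) := by
      have h2 : n + r + S.card = n + (r - S.card) + 2 * S.card := by omega
      rw [h2, pow_add, pow_add, pow_mul]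
      norm_num
    have harg : ∑ i ∈ S, (d i : ℚ) = ((∑ i ∈ S, δ i : ℕ) : ℚ) := by
      rw [Nat.cast_sum]
      exact (Finset.sum_congr rfl fun i _ => (hcast i).symm)
    rw [hsgn, harg, mul_assoc]
  calc ∑ S ∈ (Finset.univ : Finset (Fin r)).powerset,
      (-1:ℚ) ^ (n + r + S.card) * gbc (e + ∑ i ∈ S, (d i : ℚ)) (n + r)
      = (-1:ℚ)^n * ∑ S ∈ (Finset.univ : Finset (Fin r)).powerset,
          (-1:ℚ)^(r - S.card) * gbc (e + ((∑ i ∈ S, δ i : ℕ) : ℚ)) (n+r) := hLHS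
    _ = (-1:ℚ)^n * ∑ K ∈ range (N'+1+r), (Q * (Polynomial.X - 1)^r).coeff K * gbc (e + K) (n+r)
        := by rw [hA]
    _ = (-1:ℚ)^n * ∑ K ∈ range (N'+1), Q.coeff K * gbc (e + K) n := by
        rw [show N'+1+r = (N'+1)+r by omega, hB]

theorem Ahat_values (n r : ℕ) (hr : 1 ≤ r) (d : Fin r → ℤ) (hd : ∀ i, 1 < d i)
    (heven : (2 : ℤ) ∣ ((n : ℤ) + r + 1 - ∑ i, d i)) :
    ((n : ℤ) + r + 1 - ∑ i, d i < 0 → Even n →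
      2 * gbc ((n : ℚ) + 1 - ((n : ℚ) + r + 1 - ∑ i, (d i : ℚ)) / 2) (n + 1) ≤ Ahat n r d ∧
      0 < 2 * gbc ((n : ℚ) + 1 - ((n : ℚ) + r + 1 - ∑ i, (d i : ℚ)) / 2) (n + 1)) ∧
    (Odd n → Ahat n r d = 0) := by
  classical
  have hM := master n r d hd
  set δ : Fin r → ℕ := fun i => (d i).toNat with hδdef
  have hδ1 : ∀ i, 1 ≤ δ i := fun i => by have := hd i; simp [hδdef]; omega
  have hcast : ∀ i, ((δ i : ℕ) : ℚ) = (d i : ℚ) := fun i => by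
    have h : ((d i).toNat : ℤ) = d i := Int.toNat_of_nonneg (by have := hd i; omega)
    exact_mod_cast congrArg (fun z : ℤ => (z : ℚ)) h
  set N' : ℕ := ∑ i, (δ i - 1) with hN'
  set e : ℚ := ((n : ℚ) + r + 1 - ∑ i, (d i : ℚ)) / 2 - 1 with he
  set Q : Polynomial ℚ := ∏ i, gpoly (δ i) with hQ
  have hsumδ : N' + r = ∑ i, δ i := by
    have hstep : ∀ i ∈ (Finset.univ : Finset (Fin r)), δ i - 1 + 1 = δ i :=
      fun i _ => by have := hδ1 i; omega
    calc ∑ i, (δ i - 1) + r = ∑ i, (δ i - 1) + ∑ _i : Fin r, 1 := by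
          simp [Finset.sum_const, Finset.card_univ]
      _ = ∑ i, ((δ i - 1) + 1) := Finset.sum_add_distrib.symm
      _ = ∑ i, δ i := Finset.sum_congr rfl hstep
  have hN'cast : (N' : ℚ) = (∑ i, (d i : ℚ)) - r := by
    have h1 : ((N' + r : ℕ) : ℚ) = ((∑ i, δ i : ℕ) : ℚ) := by exact_mod_cast hsumδ
    rw [Nat.cast_sum] at h1
    rw [Finset.sum_congr rfl (fun i _ => hcast i)] at h1
    push_cast at h1 ⊢
    linarith
  have he2 : (N' : ℚ) = (n:ℚ) - 1 - 2*e := by rw [hN'cast, he]; ring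
  constructor
  · intro hneg hnEven
    obtain ⟨z, hz⟩ := heven
    have hzneg : z < 0 := by omega
    have hzq : ((n : ℚ) + r + 1 - ∑ i, (d i : ℚ)) = ((2*z : ℤ) : ℚ) := by
      have := congrArg (fun w : ℤ => (w : ℚ)) hz
      push_cast at this ⊢
      linarith
    have heZ : e = ((z - 1 : ℤ) : ℚ) := by rw [he, hzq]; push_cast; ring
    have hterm_nonneg : ∀ K : ℕ, 0 ≤ gbc (e + K) n := fun K => by
      have harg : e + K = ((z - 1 + K : ℤ) : ℚ) := by rw [heZ]; push_cast; ring
      rw [harg]; exact gbc_int_nonneg _ n hnEven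
    have hcoeff := prod_gpoly_coeff δ hδ1 Finset.univ
    have hlow : ∑ K ∈ range (N'+1), gbc (e + K) n
        ≤ ∑ K ∈ range (N'+1), Q.coeff K * gbc (e + K) n := by
      refine Finset.sum_le_sum fun K hK => ?_
      have h1 : 1 ≤ Q.coeff K := (hcoeff K).2 (by rw [Finset.mem_range] at hK; omega)
      nlinarith [hterm_nonneg K, h1]
    have hsum : ∑ K ∈ range (N'+1), gbc (e + K) n = 2 * gbc ((n:ℚ) - e) (n+1) := by
      rw [gbc_sum_range e n (N'+1)]
      have h1 : e + ((N'+1 : ℕ) : ℚ) = (n:ℚ) - e := by push_cast [he2]; ring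
      have h2 : gbc e (n+1) = - gbc ((n:ℚ) - e) (n+1) := by
        have h5 := gbc_reflect ((n:ℚ) - e) (n+1)
        have harg : (((n+1 : ℕ)):ℚ) - 1 - ((n:ℚ) - e) = e := by push_cast; ring
        rw [harg] at h5
        rw [h5, (Even.add_one hnEven).neg_one_pow]
        ring
      rw [h1, h2]; ring
    have hfinal_arg : (n:ℚ) + 1 - ((n : ℚ) + r + 1 - ∑ i, (d i : ℚ))/2 = (n:ℚ) - e := by
      rw [he]; ring
    have hpos : 0 < gbc ((n:ℚ) - e) (n+1) := by
      apply gbc_pos_of_factors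
      intro i hi
      have harg : (n:ℚ) - e - i = ((n - (z-1) - i : ℤ) : ℚ) := by rw [heZ]; push_cast; ring
      rw [harg]
      have : (0:ℤ) < n - (z-1) - i := by omega
      exact_mod_cast this
    constructor
    · rw [hfinal_arg, hM, hnEven.neg_one_pow, one_mul]
      calc 2 * gbc ((n:ℚ) - e) (n+1) = ∑ K ∈ range (N'+1), gbc (e + K) n := hsum.symm
        _ ≤ _ := hlow
    · rw [hfinal_arg]; linarith
  · intro hnOdd
    rw [hM]
    have hpal := prod_gpoly_palindrome δ hδ1 Finset.univ
    have hzero : ∑ K ∈ range (N'+1), Q.coeff K * gbc (e + K) n = 0 := by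
      have hrefl := Finset.sum_range_reflect (fun K => Q.coeff K * gbc (e + K) n) (N'+1)
      have hstep : ∀ K ∈ range (N'+1),
          Q.coeff (N' + 1 - 1 - K) * gbc (e + ((N' + 1 - 1 - K : ℕ) : ℚ)) n
          = Q.coeff K * (- gbc (e + K) n) := by
        intro K hK
        have hKN : K ≤ N' := by rw [Finset.mem_range] at hK; omega
        have h1 : N' + 1 - 1 - K = N' - K := by omega
        have h2 : Q.coeff (N' - K) = Q.coeff K := (hpal K hKN).symm
        have h3 : ((N' - K : ℕ) : ℚ) = (N' : ℚ) - K := by push_cast [Nat.cast_sub hKN]; ring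
        have h4 : e + ((N':ℚ) - K) = (n:ℚ) - 1 - (e + K) := by rw [he2]; ring
        have h5 := gbc_reflect (e + K) n
        rw [h1, h2, h3, h4]
        rw [show ((n:ℚ) - 1 - (e + K)) = ((n:ℕ):ℚ) - 1 - (e + K) by push_cast; ring] at h5 ⊢
        rw [h5, hnOdd.neg_one_pow]
        ring
      rw [Finset.sum_congr rfl hstep] at hrefl
      have hneg : ∑ K ∈ range (N'+1), Q.coeff K * (- gbc (e + K) n)
          = - ∑ K ∈ range (N'+1), Q.coeff K * gbc (e + K) n := by
        rw [← Finset.sum_neg_distrib]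
        exact Finset.sum_congr rfl fun K _ => by ring
      rw [hneg] at hrefl
      linarith
    rw [hzero, mul_zero]
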